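/- arXiv:2101.03591 — 3 statements merged into one kernel-verified Lean document; each statement's English description precedes it below -/
import Mathlib

section
/- If a presentation Q is obtained from a presentation P by an elementary Tietze transformation (either (T1) adding a derivable generator or (T2) adding a derivable relation), then the inclusion morphism P → Q induces an isomorphism of presented monoids ⟦P⟧ ≅ ⟦Q⟧. -/
/-- A presentation of a monoid: a type of generators and a set of relations
between words (elements of the free monoid) over the generators. -/
structure MonPres : Type 1 where
  gen : Type
  rel : Set (FreeMonoid gen × FreeMonoid gen)

namespace MonPres

/-- The congruence on the free monoid generated by the relations. -/
def con (P : MonPres) : Con (FreeMonoid P.gen) :=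
  conGen fun u v => (u, v) ∈ P.rel

/-- The monoid presented by a presentation. -/
abbrev Presented (P : MonPres) : Type := P.con.Quotient

end MonPres

/-- A morphism of presentations. -/
structure MonPresHom (P Q : MonPres) where
  toFun : P.gen → Q.gen
  map_rel : ∀ p ∈ P.rel,
    (FreeMonoid.map toFun p.1, FreeMonoid.map toFun p.2) ∈ Q.rel

namespace MonPresHom

/-- The monoid homomorphism induced on presented monoids. -/
def induced {P Q : MonPres} (f : MonPresHom P Q) : P.Presented →* Q.Presented :=
  Con.lift P.con ((Con.mk' Q.con).comp (FreeMonoid.map f.toFun)) (by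
    refine Con.conGen_le.2 ?_
    intro x y hxy
    simp only [Con.ker_rel, MonoidHom.comp_apply, Con.coe_mk']
    exact (Con.eq _).mpr (ConGen.Rel.of _ _ (f.map_rel (x, y) hxy)))

/-- Identity morphism of presentations. -/
def id (P : MonPres) : MonPresHom P P where
  toFun := _root_.id
  map_rel := by intro p hp; simpa using hp

/-- Composition of morphisms of presentations. -/
def comp {P Q R : MonPres} (g : MonPresHom Q R) (f : MonPresHom P Q) :
    MonPresHom P R where
  toFun := g.toFun ∘ f.toFun
  map_rel := by
    intro p hp
    have h := g.map_rel _ (f.map_rel p hp)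
    simpa [FreeMonoid.map_comp] using h

end MonPresHom

/-- The standard presentation of a monoid `M`: generators are the elements of
`M`, and relations are all pairs of words whose products in `M` coincide. -/
def stdPres (M : Type) [Monoid M] : MonPres where
  gen := M
  rel := {p | FreeMonoid.lift (id : M → M) p.1 = FreeMonoid.lift (id : M → M) p.2}
namespace MonPres

/-- (T1) Adding a derivable generator: a fresh generator (`none`) together
with a relation `u → a`. -/
def addGen (P : MonPres) (u : FreeMonoid P.gen) : MonPres where
  gen := Option P.gen
  rel := (fun p : FreeMonoid P.gen × FreeMonoid P.gen =>
      (FreeMonoid.map some p.1, FreeMonoid.map some p.2)) '' P.rel ∪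
    {(FreeMonoid.map some u, FreeMonoid.of (none : Option P.gen))}

/-- (T2) Adding a relation `u → v`. -/
def addRel (P : MonPres) (u v : FreeMonoid P.gen) : MonPres where
  gen := P.gen
  rel := insert (u, v) P.rel

/-- The inclusion of `P` into `P.addGen u`. -/
def addGenIncl (P : MonPres) (u : FreeMonoid P.gen) :
    MonPresHom P (P.addGen u) where
  toFun := some
  map_rel := fun p hp => Or.inl ⟨p, hp, rfl⟩

/-- The inclusion of `P` into `P.addRel u v`. -/
def addRelIncl (P : MonPres) (u v : FreeMonoid P.gen) :
    MonPresHom P (P.addRel u v) where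
  toFun := _root_.id
  map_rel := by
    intro p hp
    simp only [addRel]
    right
    rw [FreeMonoid.map_id]
    exact hp

end MonPres


section Aux

open MonPres

def sigma' (P : MonPres) (u : FreeMonoid P.gen) : Option P.gen → FreeMonoid P.gen
  | some a => FreeMonoid.of a
  | none => u

lemma sigma_map_some (P : MonPres) (u : FreeMonoid P.gen) (w : FreeMonoid P.gen) :
    FreeMonoid.lift (sigma' P u) (FreeMonoid.map some w) = w := by
  have h : (FreeMonoid.lift (sigma' P u)).comp (FreeMonoid.map some) =
      MonoidHom.id (FreeMonoid P.gen) := by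
    apply FreeMonoid.hom_eq; intro a; simp [sigma']
  simpa using DFunLike.congr_fun h w

def addGenInv (P : MonPres) (u : FreeMonoid P.gen) :
    (P.addGen u).Presented →* P.Presented :=
  Con.lift _ ((Con.mk' P.con).comp (FreeMonoid.lift (sigma' P u))) (by
    refine Con.conGen_le.2 ?_
    rintro x y (⟨⟨p1, p2⟩, hp, heq⟩ | h)
    · injection heq with h1 h2
      subst h1; subst h2
      simp only [MonPres.addGen, Con.ker_rel, MonoidHom.comp_apply, Con.coe_mk', sigma_map_some]
      exact (Con.eq _).mpr (by erw [sigma_map_some, sigma_map_some]; exact ConGen.Rel.of _ _ hp)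
    · replace h := Set.mem_singleton_iff.mp h
      injection h with h1 h2
      subst h1; subst h2
      simp only [MonPres.addGen, Con.ker_rel, MonoidHom.comp_apply, Con.coe_mk', sigma_map_some]
      exact congrArg P.con.mk' ((sigma_map_some P u u).trans (FreeMonoid.lift_eval_of (sigma' P u) none).symm))

lemma addGen_key (P : MonPres) (u : FreeMonoid P.gen) (w : FreeMonoid (Option P.gen)) :
    (Con.mk' (P.addGen u).con)
      (FreeMonoid.map some (FreeMonoid.lift (sigma' P u) w)) = Con.mk' (P.addGen u).con w := by
  have h : ((Con.mk' (P.addGen u).con).comp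
        ((FreeMonoid.map some).comp (FreeMonoid.lift (sigma' P u)))) =
      Con.mk' (P.addGen u).con := by
    apply FreeMonoid.hom_eq
    rintro (_ | a)
    · simp only [MonPres.addGen, MonoidHom.comp_apply, FreeMonoid.lift_eval_of, sigma']
      exact (Con.eq _).mpr (ConGen.Rel.of _ _ (Set.mem_union_right _ rfl))
    · rfl
  exact DFunLike.congr_fun h w

def addRelInv (P : MonPres) (u v : FreeMonoid P.gen) (huv : P.con u v) :
    (P.addRel u v).Presented →* P.Presented :=
  Con.lift _ (Con.mk' P.con) (by
    refine Con.conGen_le.2 ?_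
    intro x y h
    rcases h with h | h
    · have h1 : x = u := congrArg Prod.fst h
      have h2 : y = v := congrArg Prod.snd h
      erw [Con.ker_rel, h1, h2]
      exact (Con.eq _).mpr huv
    · exact (Con.eq _).mpr (ConGen.Rel.of _ _ h))

end Aux

/-- an elementary Tietze transformation, (T1) adding a derivable
generator or (T2) adding a derivable relation, induces an isomorphism of
presented monoids via the inclusion morphism. -/
theorem stmt3 :
    (∀ (P : MonPres) (u : FreeMonoid P.gen),
      Function.Bijective (P.addGenIncl u).induced) ∧
    (∀ (P : MonPres) (u v : FreeMonoid P.gen), P.con u v →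
      Function.Bijective (P.addRelIncl u v).induced) := by
  constructor
  · intro P u
    apply Function.bijective_iff_has_inverse.mpr
    refine ⟨addGenInv P u, ?_, ?_⟩
    · intro x
      refine Con.induction_on x fun w => ?_
      simp only [MonPres.addGen, MonPresHom.induced, addGenInv, MonPres.addGenIncl,
        Con.lift_coe, MonoidHom.comp_apply, Con.coe_mk', sigma_map_some]
      exact congrArg P.con.mk' (sigma_map_some P u w)
    · intro x
      refine Con.induction_on x fun w => ?_
      simp only [MonPresHom.induced, addGenInv, MonPres.addGenIncl, Con.lift_coe,
        MonoidHom.comp_apply, Con.coe_mk']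
      exact addGen_key P u w
  · intro P u v huv
    apply Function.bijective_iff_has_inverse.mpr
    refine ⟨addRelInv P u v huv, ?_, ?_⟩
    · intro x
      refine Con.induction_on x fun w => ?_
      simp [MonPresHom.induced, addRelInv, MonPres.addRelIncl]
      erw [FreeMonoid.map_id]
      rfl
    · intro x
      refine Con.induction_on x fun w => ?_
      simp [MonPresHom.induced, addRelInv, MonPres.addRelIncl]
      exact congrArg (Con.mk' (P.addRel u v).con) (DFunLike.congr_fun (FreeMonoid.map_id (α := P.gen)) w)
end

section
/- Let w : P → Q be a morphism of reflexive presentations such that ⟦w⟧ : ⟦P⟧ → ⟦Q⟧ is an isomorphism, let R and S be finite reflexive presentations, and let i : R → S, f : R → P, g : S → Q be morphisms of presentations with w ∘ f = g ∘ i. Then there exist countable reflexive subpresentations P^ω ⊆ P and Q^ω ⊆ Q (i.e. with countable generator sets, included in P and Q respectively) such that w restricts to a morphism w^ω : P^ω → Q^ω inducing an isomorphism ⟦P^ω⟧ ≅ ⟦Q^ω⟧, f factors as the inclusion P^ω ⊆ P composed with a morphism f' : R → P^ω, g factors as the inclusion Q^ω ⊆ Q composed with a morphism g' : S → Q^ω,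 and w^ω ∘ f' = g' ∘ i. -/
/-- A presentation is reflexive when every word is related to itself. -/
def MonPres.Reflexive (P : MonPres) : Prop :=
  ∀ u : FreeMonoid P.gen, (u, u) ∈ P.rel

/-- A reflexive presentation is finite when its set of generators is finite
and its set of relations, apart from the reflexivity relations, is finite. -/
def MonPres.FiniteRefl (P : MonPres) : Prop :=
  Finite P.gen ∧ ({p ∈ P.rel | p.1 ≠ p.2}).Finite

-- helpers
theorem MonPres.con_iff (P : MonPres) {u v : FreeMonoid P.gen} :
    P.con u v ↔ ConGen.Rel (fun a b => (a, b) ∈ P.rel) u v := Iff.rfl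

theorem exists_restrict {α : Type} {A : Set α} {u : FreeMonoid α}
    (h : ∀ a ∈ FreeMonoid.toList u, a ∈ A) :
    ∃ x : FreeMonoid A, FreeMonoid.map Subtype.val x = u := by
  refine ⟨FreeMonoid.ofList ((FreeMonoid.toList u).attach.map fun a => ⟨a.1, h a.1 a.2⟩), ?_⟩
  apply FreeMonoid.toList.injective
  simp [FreeMonoid.toList_map, List.map_map]

theorem map_val_injective {α : Type} {A : Set α} :
    Function.Injective (FreeMonoid.map (Subtype.val : A → α)) := by
  intro x y hxy
  apply FreeMonoid.toList.injective
  have h2 := congrArg FreeMonoid.toList hxy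
  simp only [FreeMonoid.toList_map] at h2
  exact List.map_injective_iff.mpr Subtype.val_injective h2

theorem map_val_inclusion {α : Type} {A B : Set α} (h : A ⊆ B) (u : FreeMonoid A) :
    FreeMonoid.map (Subtype.val : B → α) (FreeMonoid.map (Set.inclusion h) u) =
    FreeMonoid.map Subtype.val u := by
  apply FreeMonoid.toList.injective
  simp [FreeMonoid.toList_map, List.map_map, Function.comp]

theorem MonPresHom.mapCon {X Y : MonPres} (h : MonPresHom X Y) {u v : FreeMonoid X.gen}
    (huv : X.con u v) :
    Y.con (FreeMonoid.map h.toFun u) (FreeMonoid.map h.toFun v) := by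
  rw [MonPres.con_iff] at huv
  induction huv with
  | of x y hxy => exact ConGen.Rel.of _ _ (h.map_rel (x, y) hxy)
  | refl x => exact ConGen.Rel.refl _
  | symm _ ih => exact ConGen.Rel.symm ih
  | trans _ _ ih1 ih2 => exact ConGen.Rel.trans ih1 ih2
  | mul _ _ ih1 ih2 =>
    rw [MonPres.con_iff, map_mul, map_mul]
    exact ConGen.Rel.mul ih1 ih2

open FreeMonoid in
@[reducible] def MonPres.sub (P : MonPres) (A : Set P.gen) : MonPres where
  gen := A
  rel := {p | (FreeMonoid.map Subtype.val p.1, FreeMonoid.map Subtype.val p.2) ∈ P.rel}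

def MonPres.incl (P : MonPres) (A : Set P.gen) : MonPresHom (P.sub A) P :=
  ⟨Subtype.val, fun _ hp => hp⟩

@[reducible] def MonPres.subHom (P : MonPres) {A B : Set P.gen} (h : A ⊆ B) :
    MonPresHom (P.sub A) (P.sub B) where
  toFun := Set.inclusion h
  map_rel := by
    intro p hp
    show (FreeMonoid.map Subtype.val (FreeMonoid.map (Set.inclusion h) p.1),
        FreeMonoid.map Subtype.val (FreeMonoid.map (Set.inclusion h) p.2)) ∈ P.rel
    rw [map_val_inclusion, map_val_inclusion]
    exact hp

/-- finite support of a derivation -/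
theorem exists_support (P : MonPres) {u v : FreeMonoid P.gen} (h : P.con u v) :
    ∃ F : Set P.gen, F.Finite ∧ ∃ x y : FreeMonoid ((P.sub F).gen),
      FreeMonoid.map Subtype.val x = u ∧ FreeMonoid.map Subtype.val y = v ∧
      (P.sub F).con x y := by
  rw [MonPres.con_iff] at h
  induction h with
  | of a b hab =>
    refine ⟨{c | c ∈ FreeMonoid.toList a} ∪ {c | c ∈ FreeMonoid.toList b},
      (List.finite_toSet _).union (List.finite_toSet _), ?_⟩
    obtain ⟨x, hx⟩ := exists_restrict (A := _ ∪ _)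
      (u := a) (fun c hc => Or.inl hc)
    obtain ⟨y, hy⟩ := exists_restrict (A := {c | c ∈ FreeMonoid.toList a} ∪ _)
      (u := b) (fun c hc => Or.inr hc)
    refine ⟨x, y, hx, hy, ?_⟩
    exact ConGen.Rel.of _ _ (show (FreeMonoid.map Subtype.val x, FreeMonoid.map Subtype.val y) ∈ P.rel by rw [hx, hy]; exact hab)
  | refl a =>
    refine ⟨{c | c ∈ FreeMonoid.toList a}, List.finite_toSet _, ?_⟩
    obtain ⟨x, hx⟩ := exists_restrict (A := {c | c ∈ FreeMonoid.toList a}) (u := a) (fun c hc => hc)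
    exact ⟨x, x, hx, hx, (P.sub _).con.refl x⟩
  | symm _ ih =>
    obtain ⟨F, hF, x, y, hx, hy, hcon⟩ := ih
    exact ⟨F, hF, y, x, hy, hx, (P.sub F).con.symm hcon⟩
  | trans _ _ ih1 ih2 =>
    obtain ⟨F1, hF1, x1, y1, hx1, hy1, hcon1⟩ := ih1
    obtain ⟨F2, hF2, x2, y2, hx2, hy2, hcon2⟩ := ih2
    refine ⟨F1 ∪ F2, hF1.union hF2, FreeMonoid.map (Set.inclusion Set.subset_union_left) x1,
      FreeMonoid.map (Set.inclusion Set.subset_union_right) y2, ?_, ?_, ?_⟩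
    · rw [map_val_inclusion]; exact hx1
    · rw [map_val_inclusion]; exact hy2
    · have h1 := (P.subHom (Set.subset_union_left (s := F1) (t := F2))).mapCon hcon1
      have h2 := (P.subHom (Set.subset_union_right (s := F1) (t := F2))).mapCon hcon2
      have heq : FreeMonoid.map (Set.inclusion (Set.subset_union_left (s := F1) (t := F2))) y1 =
          FreeMonoid.map (Set.inclusion (Set.subset_union_right (s := F1) (t := F2))) x2 := by
        apply map_val_injective
        rw [map_val_inclusion, map_val_inclusion, hy1, hx2]
      exact (P.sub _).con.trans (heq ▸ h1) h2
  | mul _ _ ih1 ih2 =>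
    obtain ⟨F1, hF1, x1, y1, hx1, hy1, hcon1⟩ := ih1
    obtain ⟨F2, hF2, x2, y2, hx2, hy2, hcon2⟩ := ih2
    refine ⟨F1 ∪ F2, hF1.union hF2,
      FreeMonoid.map (Set.inclusion Set.subset_union_left) x1 *
        FreeMonoid.map (Set.inclusion Set.subset_union_right) x2,
      FreeMonoid.map (Set.inclusion Set.subset_union_left) y1 *
        FreeMonoid.map (Set.inclusion Set.subset_union_right) y2, ?_, ?_, ?_⟩
    · rw [map_mul, map_val_inclusion, map_val_inclusion, hx1, hx2]
    · rw [map_mul, map_val_inclusion, map_val_inclusion, hy1, hy2]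
    · exact (P.sub _).con.mul ((P.subHom Set.subset_union_left).mapCon hcon1)
        ((P.subHom Set.subset_union_right).mapCon hcon2)

def wordsOver {α : Type} (A : Set α) : Set (FreeMonoid α) :=
  {u | ∀ a ∈ FreeMonoid.toList u, a ∈ A}

theorem wordsOver_countable {α : Type} {A : Set α} (hA : A.Countable) :
    (wordsOver A).Countable := by
  haveI := hA.to_subtype
  haveI : Countable (FreeMonoid ↥A) := Countable.of_equiv (List ↥A) FreeMonoid.ofList
  refine Set.Countable.mono ?_ (Set.countable_range (FreeMonoid.map (Subtype.val : A → α)))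
  intro u hu
  obtain ⟨x, hx⟩ := exists_restrict hu
  exact ⟨x, hx⟩

theorem wordsOver_mono {α : Type} {A B : Set α} (h : A ⊆ B) : wordsOver A ⊆ wordsOver B :=
  fun _ hu a ha => h (hu a ha)

theorem mem_wordsOver_map_val {α : Type} {A : Set α} (x : FreeMonoid ↥A) :
    FreeMonoid.map Subtype.val x ∈ wordsOver A := by
  intro a ha
  rw [FreeMonoid.toList_map] at ha
  obtain ⟨b, _, rfl⟩ := List.mem_map.mp ha
  exact b.2

theorem list_subset_iUnion_mono {α : Type} {A : ℕ → Set α}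
    (hmono : ∀ m n, m ≤ n → A m ⊆ A n)
    (l : List α) (h : ∀ a ∈ l, a ∈ ⋃ n, A n) : ∃ n, ∀ a ∈ l, a ∈ A n := by
  induction l with
  | nil => exact ⟨0, by simp⟩
  | cons a l ih =>
    obtain ⟨n, hn⟩ := ih (fun b hb => h b (List.mem_cons_of_mem _ hb))
    obtain ⟨m, hm⟩ := Set.mem_iUnion.mp (h a List.mem_cons_self)
    refine ⟨max n m, fun b hb => ?_⟩
    rcases List.mem_cons.mp hb with rfl | hb
    · exact hmono m _ (le_max_right _ _) hm
    · exact hmono n _ (le_max_left _ _) (hn b hb)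

/-- transporting a derivation with support `F ⊆ A` to the subpresentation on `A` -/
theorem con_of_support {P : MonPres} {A : Set P.gen} {x y : FreeMonoid ((P.sub A).gen)}
    {F : Set P.gen} (hFA : F ⊆ A)
    (hsupp : ∃ x' y' : FreeMonoid ((P.sub F).gen),
      FreeMonoid.map Subtype.val x' = FreeMonoid.map Subtype.val x ∧
      FreeMonoid.map Subtype.val y' = FreeMonoid.map Subtype.val y ∧
      (P.sub F).con x' y') :
    (P.sub A).con x y := by
  obtain ⟨x', y', hx', hy', hcon⟩ := hsupp
  have hlift := (P.subHom hFA).mapCon hcon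
  have hx : FreeMonoid.map (P.subHom hFA).toFun x' = x := by
    apply map_val_injective
    show FreeMonoid.map Subtype.val (FreeMonoid.map (Set.inclusion hFA) x') = _
    rw [map_val_inclusion]; exact hx'
  have hy : FreeMonoid.map (P.subHom hFA).toFun y' = y := by
    apply map_val_injective
    show FreeMonoid.map Subtype.val (FreeMonoid.map (Set.inclusion hFA) y') = _
    rw [map_val_inclusion]; exact hy'
  rwa [hx, hy] at hlift

theorem MonPresHom.ext' {P Q : MonPres} {h k : MonPresHom P Q} (H : h.toFun = k.toFun) :
    h = k := by
  cases h; cases k; cases H; rfl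

theorem MonPresHom.induced_coe {P Q : MonPres} (h : MonPresHom P Q) (u : FreeMonoid P.gen) :
    h.induced (u : P.Presented) = ((FreeMonoid.map h.toFun u : FreeMonoid Q.gen) : Q.Presented) :=
  rfl

section Tower
variable {α β : Type} (wf : α → β)
  (SP : FreeMonoid α → FreeMonoid α → Set α)
  (LA : FreeMonoid β → Set α) (G : FreeMonoid β → Set β)
  (A0 : Set α) (B0 : Set β)

def tower : ℕ → Set α × Set β
  | 0 => (A0, B0)
  | n+1 =>
    let AB := tower n
    let A' := AB.1 ∪ (⋃ u ∈ wordsOver AB.1, ⋃ v ∈ wordsOver AB.1, SP u v) ∪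
      (⋃ v ∈ wordsOver AB.2, LA v)
    (A', AB.2 ∪ wf '' A' ∪ (⋃ v ∈ wordsOver AB.2, G v))

theorem tower_fst_subset_succ (n : ℕ) :
    (tower wf SP LA G A0 B0 n).1 ⊆ (tower wf SP LA G A0 B0 (n+1)).1 := by
  rw [tower]
  exact fun a ha => Or.inl (Or.inl ha)

theorem tower_snd_subset_succ (n : ℕ) :
    (tower wf SP LA G A0 B0 n).2 ⊆ (tower wf SP LA G A0 B0 (n+1)).2 := by
  rw [tower]
  exact fun a ha => Or.inl (Or.inl ha)

theorem tower_fst_mono {m n : ℕ} (h : m ≤ n) :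
    (tower wf SP LA G A0 B0 m).1 ⊆ (tower wf SP LA G A0 B0 n).1 := by
  induction n with
  | zero => rw [Nat.le_zero.mp h]
  | succ n ih =>
    rcases Nat.lt_or_ge m (n+1) with h' | h'
    · exact (ih (Nat.lt_succ_iff.mp h')).trans (tower_fst_subset_succ _ _ _ _ _ _ n)
    · rw [Nat.le_antisymm h h']

theorem tower_snd_mono {m n : ℕ} (h : m ≤ n) :
    (tower wf SP LA G A0 B0 m).2 ⊆ (tower wf SP LA G A0 B0 n).2 := by
  induction n with
  | zero => rw [Nat.le_zero.mp h]
  | succ n ih =>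
    rcases Nat.lt_or_ge m (n+1) with h' | h'
    · exact (ih (Nat.lt_succ_iff.mp h')).trans (tower_snd_subset_succ _ _ _ _ _ _ n)
    · rw [Nat.le_antisymm h h']

theorem tower_SP_subset {n : ℕ} {u v : FreeMonoid α}
    (hu : u ∈ wordsOver (tower wf SP LA G A0 B0 n).1)
    (hv : v ∈ wordsOver (tower wf SP LA G A0 B0 n).1) :
    SP u v ⊆ (tower wf SP LA G A0 B0 (n+1)).1 := by
  rw [tower]
  intro a ha
  exact Or.inl (Or.inr (Set.mem_biUnion hu (Set.mem_biUnion hv ha)))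

theorem tower_LA_subset {n : ℕ} {v : FreeMonoid β}
    (hv : v ∈ wordsOver (tower wf SP LA G A0 B0 n).2) :
    LA v ⊆ (tower wf SP LA G A0 B0 (n+1)).1 := by
  rw [tower]
  intro a ha
  exact Or.inr (Set.mem_biUnion hv ha)

theorem tower_G_subset {n : ℕ} {v : FreeMonoid β}
    (hv : v ∈ wordsOver (tower wf SP LA G A0 B0 n).2) :
    G v ⊆ (tower wf SP LA G A0 B0 (n+1)).2 := by
  rw [tower]
  intro a ha
  exact Or.inr (Set.mem_biUnion hv ha)

theorem tower_image_subset (n : ℕ) :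
    wf '' (tower wf SP LA G A0 B0 (n+1)).1 ⊆ (tower wf SP LA G A0 B0 (n+1)).2 := by
  conv_lhs => rw [tower]
  conv_rhs => rw [tower]
  intro b hb
  exact Or.inl (Or.inr hb)

theorem tower_countable (hA0 : A0.Countable) (hB0 : B0.Countable)
    (hSP : ∀ u v, (SP u v).Countable) (hLA : ∀ v, (LA v).Countable)
    (hG : ∀ v, (G v).Countable) (n : ℕ) :
    (tower wf SP LA G A0 B0 n).1.Countable ∧ (tower wf SP LA G A0 B0 n).2.Countable := by
  induction n with
  | zero => exact ⟨hA0, hB0⟩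
  | succ n ih =>
    obtain ⟨hA, hB⟩ := ih
    have hA' : (tower wf SP LA G A0 B0 (n+1)).1.Countable := by
      rw [tower]
      refine (hA.union ?_).union ?_
      · exact Set.Countable.biUnion (wordsOver_countable hA)
          (fun u _ => Set.Countable.biUnion (wordsOver_countable hA) (fun v _ => hSP u v))
      · exact Set.Countable.biUnion (wordsOver_countable hB) (fun v _ => hLA v)
    refine ⟨hA', ?_⟩
    rw [tower]
    refine (hB.union (hA'.image wf)).union ?_
    exact Set.Countable.biUnion (wordsOver_countable hB) (fun v _ => hG v)

end Tower

theorem freemap_map {α β γ : Type} (g : β → γ) (f : α → β) (u : FreeMonoid α) :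
    FreeMonoid.map g (FreeMonoid.map f u) = FreeMonoid.map (g ∘ f) u := by
  apply FreeMonoid.toList.injective
  simp [FreeMonoid.toList_map, List.map_map]

/-- given a weak equivalence `w : P → Q` between reflexive
presentations and a commutative square over it whose left side `i : R → S`
has finite reflexive source and target, the square factors through a weak
equivalence `w^ω : P^ω → Q^ω` between countable reflexive subpresentations of
`P` and `Q`. -/
theorem stmt10 (P Q R S : MonPres)
    (hP : P.Reflexive) (hQ : Q.Reflexive) (hR : R.Reflexive) (hS : S.Reflexive)
    (hRfin : R.FiniteRefl) (hSfin : S.FiniteRefl)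
    (w : MonPresHom P Q) (hw : Function.Bijective w.induced)
    (i : MonPresHom R S) (f : MonPresHom R P) (g : MonPresHom S Q)
    (hsq : w.comp f = g.comp i) :
    ∃ (Pω Qω : MonPres) (ιP : MonPresHom Pω P) (ιQ : MonPresHom Qω Q),
      Pω.Reflexive ∧ Qω.Reflexive ∧
      Countable Pω.gen ∧ Countable Qω.gen ∧
      Function.Injective ιP.toFun ∧ Function.Injective ιQ.toFun ∧
      ∃ (wω : MonPresHom Pω Qω) (f' : MonPresHom R Pω) (g' : MonPresHom S Qω),
        ιQ.comp wω = w.comp ιP ∧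
        Function.Bijective wω.induced ∧
        ιP.comp f' = f ∧ ιQ.comp g' = g ∧
        wω.comp f' = g'.comp i := by
  classical
  -- chosen supports for P-derivations
  have hsuppP : ∀ u v : FreeMonoid P.gen, ∃ F : Set P.gen, F.Countable ∧
      (P.con u v → ∃ x y : FreeMonoid ((P.sub F).gen),
        FreeMonoid.map Subtype.val x = u ∧ FreeMonoid.map Subtype.val y = v ∧
        (P.sub F).con x y) := by
    intro u v
    by_cases h : P.con u v
    · obtain ⟨F, hF, hx⟩ := exists_support P h
      exact ⟨F, hF.countable, fun _ => hx⟩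
    · exact ⟨∅, Set.countable_empty, fun h' => absurd h' h⟩
  choose SP hSPc hSP using hsuppP
  -- chosen preimages witnessing surjectivity of ⟦w⟧
  have hsurj : ∀ v : FreeMonoid Q.gen, ∃ u : FreeMonoid P.gen,
      Q.con (FreeMonoid.map w.toFun u) v := by
    intro v
    obtain ⟨p, hp⟩ := hw.2 ((v : FreeMonoid Q.gen) : Q.Presented)
    revert hp
    induction p using Con.induction_on with
    | H u =>
      intro hp
      rw [w.induced_coe] at hp
      exact ⟨u, (Con.eq _).mp hp⟩
  choose L hL using hsurj
  -- chosen supports for the surjectivity derivations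
  have hsuppQ : ∀ v : FreeMonoid Q.gen, ∃ F : Set Q.gen, F.Countable ∧
      ∃ x y : FreeMonoid ((Q.sub F).gen),
        FreeMonoid.map Subtype.val x = FreeMonoid.map w.toFun (L v) ∧
        FreeMonoid.map Subtype.val y = v ∧ (Q.sub F).con x y := by
    intro v
    obtain ⟨F, hF, hx⟩ := exists_support Q (hL v)
    exact ⟨F, hF.countable, hx⟩
  choose G hGc hG using hsuppQ
  set LA : FreeMonoid Q.gen → Set P.gen := fun v => {a | a ∈ FreeMonoid.toList (L v)}
    with hLAdef
  set T : ℕ → Set P.gen × Set Q.gen :=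
    tower w.toFun SP LA G (Set.range f.toFun) (Set.range g.toFun) with hTdef
  set Aω : Set P.gen := ⋃ n, (T n).1 with hAωdef
  set Bω : Set Q.gen := ⋃ n, (T n).2 with hBωdef
  -- monotonicity
  have hmonoA : ∀ m n, m ≤ n → (T m).1 ⊆ (T n).1 :=
    fun _ _ h => tower_fst_mono _ _ _ _ _ _ h
  have hmonoB : ∀ m n, m ≤ n → (T m).2 ⊆ (T n).2 :=
    fun _ _ h => tower_snd_mono _ _ _ _ _ _ h
  have hAsub : ∀ n, (T n).1 ⊆ Aω := fun n a ha => Set.mem_iUnion.mpr ⟨n, ha⟩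
  have hBsub : ∀ n, (T n).2 ⊆ Bω := fun n a ha => Set.mem_iUnion.mpr ⟨n, ha⟩
  -- w maps Aω into Bω
  have hwmem : ∀ a ∈ Aω, w.toFun a ∈ Bω := by
    intro a ha
    obtain ⟨n, hn⟩ := Set.mem_iUnion.mp ha
    refine hBsub (n+1) (tower_image_subset _ _ _ _ _ _ n ?_)
    exact ⟨a, tower_fst_subset_succ _ _ _ _ _ _ n hn, rfl⟩
  -- words over Aω live over some stage
  have hstageA : ∀ u ∈ wordsOver Aω, ∃ n, u ∈ wordsOver (T n).1 := by
    intro u hu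
    obtain ⟨n, hn⟩ := list_subset_iUnion_mono hmonoA (FreeMonoid.toList u)
      (by intro a ha; exact hu a ha)
    exact ⟨n, hn⟩
  have hstageB : ∀ v ∈ wordsOver Bω, ∃ n, v ∈ wordsOver (T n).2 := by
    intro v hv
    obtain ⟨n, hn⟩ := list_subset_iUnion_mono hmonoB (FreeMonoid.toList v)
      (by intro a ha; exact hv a ha)
    exact ⟨n, hn⟩
  -- closure properties of the limit
  have hSPsub : ∀ u ∈ wordsOver Aω, ∀ v ∈ wordsOver Aω, SP u v ⊆ Aω := by
    intro u hu v hv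
    obtain ⟨m, hm⟩ := hstageA u hu
    obtain ⟨n, hn⟩ := hstageA v hv
    have hm' := wordsOver_mono (hmonoA m (max m n) (le_max_left _ _)) hm
    have hn' := wordsOver_mono (hmonoA n (max m n) (le_max_right _ _)) hn
    exact (tower_SP_subset _ _ _ _ _ _ hm' hn').trans (hAsub (max m n + 1))
  have hLAsub : ∀ v ∈ wordsOver Bω, LA v ⊆ Aω := by
    intro v hv
    obtain ⟨n, hn⟩ := hstageB v hv
    exact (tower_LA_subset _ _ _ _ _ _ hn).trans (hAsub (n+1))
  have hGsub : ∀ v ∈ wordsOver Bω, G v ⊆ Bω := by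
    intro v hv
    obtain ⟨n, hn⟩ := hstageB v hv
    exact (tower_G_subset _ _ _ _ _ _ hn).trans (hBsub (n+1))
  -- countability
  haveI : Finite R.gen := hRfin.1
  haveI : Finite S.gen := hSfin.1
  have hcnt : ∀ n, (T n).1.Countable ∧ (T n).2.Countable := by
    intro n
    refine tower_countable _ _ _ _ _ _ (Set.countable_range _) (Set.countable_range _)
      hSPc (fun v => (List.finite_toSet _).countable) hGc n
  have hAωc : Aω.Countable := Set.countable_iUnion (fun n => (hcnt n).1)
  have hBωc : Bω.Countable := Set.countable_iUnion (fun n => (hcnt n).2)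
  -- the subpresentations
  refine ⟨P.sub Aω, Q.sub Bω, P.incl Aω, Q.incl Bω, ?_, ?_, hAωc.to_subtype, hBωc.to_subtype,
    Subtype.val_injective, Subtype.val_injective, ?_⟩
  · intro u; exact hP _
  · intro u; exact hQ _
  -- the restricted morphisms
  have hfmem : ∀ r : R.gen, f.toFun r ∈ Aω := fun r => hAsub 0 ⟨r, rfl⟩
  have hgmem : ∀ s : S.gen, g.toFun s ∈ Bω := fun s => hBsub 0 ⟨s, rfl⟩
  let wω : MonPresHom (P.sub Aω) (Q.sub Bω) :=
    ⟨fun a => ⟨w.toFun a.1, hwmem a.1 a.2⟩, by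
      intro p hp
      show (FreeMonoid.map Subtype.val _, FreeMonoid.map Subtype.val _) ∈ Q.rel
      dsimp only
      have key : (FreeMonoid.map w.toFun (FreeMonoid.map Subtype.val p.1),
          FreeMonoid.map w.toFun (FreeMonoid.map Subtype.val p.2)) ∈ Q.rel :=
        w.map_rel (FreeMonoid.map Subtype.val p.1, FreeMonoid.map Subtype.val p.2) hp
      convert key using 2 <;>
      · simp only [freemap_map]
        try exact rfl⟩
  let f' : MonPresHom R (P.sub Aω) :=
    ⟨fun r => ⟨f.toFun r, hfmem r⟩, by
      intro p hp
      show (FreeMonoid.map Subtype.val _, FreeMonoid.map Subtype.val _) ∈ P.rel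
      dsimp only
      have key : (FreeMonoid.map f.toFun p.1, FreeMonoid.map f.toFun p.2) ∈ P.rel :=
        f.map_rel p hp
      convert key using 2 <;>
      · simp only [freemap_map]
        try exact rfl⟩
  let g' : MonPresHom S (Q.sub Bω) :=
    ⟨fun s => ⟨g.toFun s, hgmem s⟩, by
      intro p hp
      show (FreeMonoid.map Subtype.val _, FreeMonoid.map Subtype.val _) ∈ Q.rel
      dsimp only
      have key : (FreeMonoid.map g.toFun p.1, FreeMonoid.map g.toFun p.2) ∈ Q.rel :=
        g.map_rel p hp
      convert key using 2 <;>
      · simp only [freemap_map]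
        try exact rfl⟩
  have hcomm : ∀ u : FreeMonoid ((P.sub Aω).gen),
      FreeMonoid.map Subtype.val (FreeMonoid.map wω.toFun u)
        = FreeMonoid.map w.toFun (FreeMonoid.map Subtype.val u) := by
    intro u
    simp only [freemap_map]
    exact rfl
  refine ⟨wω, f', g', MonPresHom.ext' rfl, ⟨?_, ?_⟩, MonPresHom.ext' rfl,
    MonPresHom.ext' rfl, ?_⟩
  · -- injectivity
    intro a b hab
    revert hab
    induction a using Con.induction_on with
    | H x =>
    induction b using Con.induction_on with
    | H y =>
    intro hab
    rw [MonPresHom.induced_coe, MonPresHom.induced_coe] at hab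
    have h1 := (Con.eq _).mp hab
    have h2 := (Q.incl Bω).mapCon h1
    rw [show FreeMonoid.map (Q.incl Bω).toFun (FreeMonoid.map wω.toFun x) = _ from hcomm x,
        show FreeMonoid.map (Q.incl Bω).toFun (FreeMonoid.map wω.toFun y) = _ from hcomm y] at h2
    have h3 : P.con (FreeMonoid.map Subtype.val x) (FreeMonoid.map Subtype.val y) := by
      have e : w.induced ((FreeMonoid.map Subtype.val x : FreeMonoid P.gen) : P.Presented)
          = w.induced ((FreeMonoid.map Subtype.val y : FreeMonoid P.gen) : P.Presented) := by
        rw [MonPresHom.induced_coe, MonPresHom.induced_coe]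
        exact (Con.eq _).mpr h2
      exact (Con.eq _).mp (hw.1 e)
    have hsub : SP (FreeMonoid.map Subtype.val x) (FreeMonoid.map Subtype.val y) ⊆ Aω :=
      hSPsub _ (mem_wordsOver_map_val x) _ (mem_wordsOver_map_val y)
    exact (Con.eq _).mpr (con_of_support hsub (hSP _ _ h3))
  · -- surjectivity
    intro z
    induction z using Con.induction_on with
    | H y =>
    induction y with
    | one => exact ⟨1, map_one _⟩
    | of a =>
      obtain ⟨n, hn⟩ := Set.mem_iUnion.mp a.2
      have hword : FreeMonoid.of a.1 ∈ wordsOver (T n).2 := by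
        intro c hc
        rw [FreeMonoid.toList_of, List.mem_singleton] at hc
        subst hc; exact hn
      have hwordω : FreeMonoid.of a.1 ∈ wordsOver Bω := wordsOver_mono (hBsub n) hword
      have hLAs : LA (FreeMonoid.of a.1) ⊆ Aω := hLAsub _ hwordω
      have hGs : G (FreeMonoid.of a.1) ⊆ Bω := hGsub _ hwordω
      obtain ⟨xL, hxL⟩ := exists_restrict (A := Aω) (u := L (FreeMonoid.of a.1))
        (fun c hc => hLAs hc)
      obtain ⟨x0, y0, hx0, hy0, hcon0⟩ := hG (FreeMonoid.of a.1)
      have hconω := (Q.subHom hGs).mapCon hcon0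
      have hXval : FreeMonoid.map Subtype.val (FreeMonoid.map (Q.subHom hGs).toFun x0)
          = FreeMonoid.map w.toFun (L (FreeMonoid.of a.1)) := by
        show FreeMonoid.map Subtype.val (FreeMonoid.map (Set.inclusion hGs) x0) = _
        rw [map_val_inclusion]; exact hx0
      have hYeq : FreeMonoid.map (Q.subHom hGs).toFun y0 = FreeMonoid.of a := by
        apply map_val_injective
        show FreeMonoid.map Subtype.val (FreeMonoid.map (Set.inclusion hGs) y0) = _
        rw [map_val_inclusion, hy0, FreeMonoid.map_of]
      have hwxX : FreeMonoid.map wω.toFun xL = FreeMonoid.map (Q.subHom hGs).toFun x0 := by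
        apply map_val_injective
        rw [hcomm, hxL, hXval]
      refine ⟨(xL : (P.sub Aω).Presented), ?_⟩
      rw [MonPresHom.induced_coe, hwxX, ← hYeq]
      exact (Con.eq _).mpr hconω
    | mul u v ihu ihv =>
      obtain ⟨pu, hpu⟩ := ihu
      obtain ⟨pv, hpv⟩ := ihv
      exact ⟨pu * pv, by rw [map_mul, hpu, hpv, ← Con.coe_mul]⟩
  · -- the commuting square
    refine MonPresHom.ext' (funext fun r => Subtype.ext ?_)
    exact congrFun (congrArg MonPresHom.toFun hsq) r
end

section
/- In a model category in which every object is cofibrant, every isomorphism in the homotopy category is the localization of a cospan of trivial cofibrations: for the localization functor L : M → Ho(M) at the weak equivalences, every isomorphism φ : L(X) ≅ L(Y) in Ho(M) admits an object Z together with trivial cofibrations i : X → Z and j : Y → Z such that φ equals L(i) composed with the inverse of the isomorphism L(j). -/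
open CategoryTheory CategoryTheory.Limits

universe v u

/-- A weak factorization system: the two classes lift against each other,
each class is determined by the lifting property against the other, and
every morphism factors accordingly. -/
structure IsWFS {C : Type u} [Category.{v} C] (L R : MorphismProperty C) :
    Prop where
  lift : ∀ ⦃A B X Y : C⦄ (i : A ⟶ B) (p : X ⟶ Y), L i → R p →
    HasLiftingProperty i p
  llp : ∀ ⦃A B : C⦄ (i : A ⟶ B),
    (∀ ⦃X Y : C⦄ (p : X ⟶ Y), R p → HasLiftingProperty i p) → L i
  rlp : ∀ ⦃X Y : C⦄ (p : X ⟶ Y),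
    (∀ ⦃A B : C⦄ (i : A ⟶ B), L i → HasLiftingProperty i p) → R p
  factor : ∀ ⦃X Y : C⦄ (f : X ⟶ Y),
    ∃ (Z : C) (i : X ⟶ Z) (p : Z ⟶ Y), L i ∧ R p ∧ i ≫ p = f

/-- A model structure on a category: weak equivalences satisfying 2-out-of-3,
cofibrations and fibrations, such that (cofibrations, trivial fibrations) and
(trivial cofibrations, fibrations) are weak factorization systems.
(The ambient category is required to be complete and cocomplete in the
statements below.) -/
structure ModelStruct (C : Type u) [Category.{v} C] where
  W : MorphismProperty C
  Cof : MorphismProperty C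
  Fib : MorphismProperty C
  weq_comp : ∀ ⦃X Y Z : C⦄ (f : X ⟶ Y) (g : Y ⟶ Z), W f → W g → W (f ≫ g)
  weq_of_post : ∀ ⦃X Y Z : C⦄ (f : X ⟶ Y) (g : Y ⟶ Z), W g → W (f ≫ g) → W f
  weq_of_pre : ∀ ⦃X Y Z : C⦄ (f : X ⟶ Y) (g : Y ⟶ Z), W f → W (f ≫ g) → W g
  wfs_cof_tfib : IsWFS Cof (fun _ _ p => Fib p ∧ W p)
  wfs_tcof_fib : IsWFS (fun _ _ i => Cof i ∧ W i) Fib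

/-- An object is cofibrant when the morphism from the initial object is a
cofibration. -/
def ModelStruct.Cofibrant {C : Type u} [Category.{v} C] [HasInitial C]
    (M : ModelStruct C) (X : C) : Prop :=
  M.Cof (initial.to X)

set_option linter.unusedSectionVars false

namespace Stmt16

variable {C : Type u} [Category.{v} C] [HasLimits C] [HasColimits C]

section Basic

variable (M : ModelStruct C)

lemma tfib_of_iso {X Y : C} (f : X ⟶ Y) [IsIso f] : M.Fib f ∧ M.W f :=
  M.wfs_cof_tfib.rlp f (fun _ _ i _ => inferInstance)

lemma w_id (X : C) : M.W (𝟙 X) := (tfib_of_iso M (𝟙 X)).2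

lemma cof_comp {X Y Z : C} {f : X ⟶ Y} {g : Y ⟶ Z} (hf : M.Cof f) (hg : M.Cof g) :
    M.Cof (f ≫ g) :=
  M.wfs_cof_tfib.llp _ (fun _ _ p hp => by
    haveI := M.wfs_cof_tfib.lift f p hf hp
    haveI := M.wfs_cof_tfib.lift g p hg hp
    infer_instance)

lemma fib_comp {X Y Z : C} {f : X ⟶ Y} {g : Y ⟶ Z} (hf : M.Fib f) (hg : M.Fib g) :
    M.Fib (f ≫ g) :=
  M.wfs_tcof_fib.rlp _ (fun _ _ i hi => by
    haveI := M.wfs_tcof_fib.lift i f hi hf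
    haveI := M.wfs_tcof_fib.lift i g hi hg
    infer_instance)

def Fibr (X : C) : Prop := M.Fib (terminal.from X)

lemma fibr_comp {E B : C} (q : E ⟶ B) (hq : M.Fib q) (hB : Fibr M B) : Fibr M E := by
  have h : q ≫ terminal.from B = terminal.from E := terminal.comp_from q
  have := fib_comp M hq hB
  rwa [h] at this

lemma exists_fib_repl (X : C) : ∃ (RX : C) (r : X ⟶ RX), M.Cof r ∧ M.W r ∧ Fibr M RX := by
  obtain ⟨Z, i, p, hi, hp, _⟩ := M.wfs_tcof_fib.factor (terminal.from X)
  refine ⟨Z, i, hi.1, hi.2, ?_⟩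
  have h : terminal.from Z = p := terminal.hom_ext _ _
  rw [Fibr, h]; exact hp

lemma sec_of_tfib (hcof : ∀ X : C, M.Cofibrant X) {T S : C} (p : T ⟶ S)
    (hp : M.Fib p ∧ M.W p) : ∃ s : S ⟶ T, s ≫ p = 𝟙 S := by
  haveI := M.wfs_cof_tfib.lift (initial.to S) p (hcof S) hp
  have sq : CommSq (initial.to T) (initial.to S) p (𝟙 S) := ⟨initial.hom_ext _ _⟩
  exact ⟨sq.lift, sq.fac_right⟩

lemma ret_of_tcof {U V : C} (c : U ⟶ V) (hc : M.Cof c ∧ M.W c) (hU : Fibr M U) :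
    ∃ r : V ⟶ U, c ≫ r = 𝟙 U := by
  haveI := M.wfs_tcof_fib.lift c (terminal.from U) hc hU
  have sq : CommSq (𝟙 U) c (terminal.from U) (terminal.from V) := ⟨terminal.hom_ext _ _⟩
  exact ⟨sq.lift, sq.fac_left⟩

lemma hlp_pushout_inl {S Y Z T V : C} (f : S ⟶ Y) (g : S ⟶ Z) (p : T ⟶ V)
    [HasLiftingProperty g p] : HasLiftingProperty (pushout.inl f g) p := by
  constructor
  intro t b sq
  have sq2 : CommSq (f ≫ t) g p (pushout.inr f g ≫ b) :=
    ⟨by rw [Category.assoc, sq.w, ← Category.assoc, pushout.condition, Category.assoc]⟩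
  exact CommSq.HasLift.mk'
    { l := pushout.desc t sq2.lift sq2.fac_left.symm
      fac_left := by simp [pushout.inl_desc, pushout.inr_desc, pushout.inl_desc_assoc, pushout.inr_desc_assoc]
      fac_right := by
        apply pushout.hom_ext
        · simpa [pushout.inl_desc, pushout.inr_desc, pushout.inl_desc_assoc, pushout.inr_desc_assoc] using sq.w
        · simpa [pushout.inl_desc, pushout.inr_desc, pushout.inl_desc_assoc, pushout.inr_desc_assoc] using sq2.fac_right }

lemma hlp_pushout_inr {S Y Z T V : C} (f : S ⟶ Y) (g : S ⟶ Z) (p : T ⟶ V)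
    [HasLiftingProperty f p] : HasLiftingProperty (pushout.inr f g) p := by
  constructor
  intro t b sq
  have sq2 : CommSq (g ≫ t) f p (pushout.inl f g ≫ b) :=
    ⟨by rw [Category.assoc, sq.w, ← Category.assoc, ← pushout.condition, Category.assoc]⟩
  exact CommSq.HasLift.mk'
    { l := pushout.desc sq2.lift t sq2.fac_left
      fac_left := by simp [pushout.inl_desc, pushout.inr_desc, pushout.inl_desc_assoc, pushout.inr_desc_assoc]
      fac_right := by
        apply pushout.hom_ext
        · simpa [pushout.inl_desc, pushout.inr_desc, pushout.inl_desc_assoc, pushout.inr_desc_assoc] using sq2.fac_right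
        · simpa [pushout.inl_desc, pushout.inr_desc, pushout.inl_desc_assoc, pushout.inr_desc_assoc] using sq.w }

lemma tcof_pushout_inl {S Y Z : C} (f : S ⟶ Y) (g : S ⟶ Z) (hg : M.Cof g ∧ M.W g) :
    M.Cof (pushout.inl f g) ∧ M.W (pushout.inl f g) :=
  M.wfs_tcof_fib.llp _ (fun _ _ p hp => by
    haveI := M.wfs_tcof_fib.lift g p hg hp
    exact hlp_pushout_inl f g p)

lemma tcof_pushout_inr {S Y Z : C} (f : S ⟶ Y) (g : S ⟶ Z) (hf : M.Cof f ∧ M.W f) :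
    M.Cof (pushout.inr f g) ∧ M.W (pushout.inr f g) :=
  M.wfs_tcof_fib.llp _ (fun _ _ p hp => by
    haveI := M.wfs_tcof_fib.lift f p hf hp
    exact hlp_pushout_inr f g p)

lemma cof_coprod_inl (hcof : ∀ X : C, M.Cofibrant X) (A B : C) :
    M.Cof (coprod.inl : A ⟶ A ⨿ B) :=
  M.wfs_cof_tfib.llp _ (fun T S p hp => by
    haveI := M.wfs_cof_tfib.lift (initial.to B) p (hcof B) hp
    constructor
    intro t b sq
    have sq2 : CommSq (initial.to T) (initial.to B) p (coprod.inr ≫ b) :=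
      ⟨initial.hom_ext _ _⟩
    exact CommSq.HasLift.mk'
      { l := coprod.desc t sq2.lift
        fac_left := by simp [coprod.inl_desc, coprod.inr_desc, coprod.inl_desc_assoc, coprod.inr_desc_assoc]
        fac_right := by
          apply coprod.hom_ext
          · simpa [coprod.inl_desc, coprod.inr_desc, coprod.inl_desc_assoc, coprod.inr_desc_assoc] using sq.w
          · simpa [coprod.inl_desc, coprod.inr_desc, coprod.inl_desc_assoc, coprod.inr_desc_assoc] using sq2.fac_right })

lemma cof_coprod_inr (hcof : ∀ X : C, M.Cofibrant X) (A B : C) :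
    M.Cof (coprod.inr : B ⟶ A ⨿ B) :=
  M.wfs_cof_tfib.llp _ (fun T S p hp => by
    haveI := M.wfs_cof_tfib.lift (initial.to A) p (hcof A) hp
    constructor
    intro t b sq
    have sq2 : CommSq (initial.to T) (initial.to A) p (coprod.inl ≫ b) :=
      ⟨initial.hom_ext _ _⟩
    exact CommSq.HasLift.mk'
      { l := coprod.desc sq2.lift t
        fac_left := by simp [coprod.inl_desc, coprod.inr_desc, coprod.inl_desc_assoc, coprod.inr_desc_assoc]
        fac_right := by
          apply coprod.hom_ext
          · simpa [coprod.inl_desc, coprod.inr_desc, coprod.inl_desc_assoc, coprod.inr_desc_assoc] using sq2.fac_right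
          · simpa [coprod.inl_desc, coprod.inr_desc, coprod.inl_desc_assoc, coprod.inr_desc_assoc] using sq.w })

end Basic

end Stmt16

set_option linter.unusedSectionVars false

namespace Stmt16

variable {C : Type u} [Category.{v} C] [HasLimits C] [HasColimits C]

section Htpy

variable (M : ModelStruct C)

structure Cyl (A : C) where
  obj : C
  ι : A ⨿ A ⟶ obj
  π : obj ⟶ A
  cof : M.Cof ι
  fib : M.Fib π
  wπ : M.W π
  fac : ι ≫ π = codiag A

lemma exists_cyl (A : C) : Nonempty (Cyl M A) := by
  obtain ⟨Z, i, p, hi, hp, fac⟩ := M.wfs_cof_tfib.factor (codiag A)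
  exact ⟨⟨Z, i, p, hi, hp.1, hp.2, fac⟩⟩

variable {M}

noncomputable def Cyl.i₀ {A : C} (G : Cyl M A) : A ⟶ G.obj := coprod.inl ≫ G.ι

noncomputable def Cyl.i₁ {A : C} (G : Cyl M A) : A ⟶ G.obj := coprod.inr ≫ G.ι

lemma Cyl.i₀_eq {A : C} (G : Cyl M A) : G.i₀ = coprod.inl ≫ G.ι := rfl

lemma Cyl.i₁_eq {A : C} (G : Cyl M A) : G.i₁ = coprod.inr ≫ G.ι := rfl

lemma Cyl.i₀_π {A : C} (G : Cyl M A) : G.i₀ ≫ G.π = 𝟙 A := by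
  rw [Cyl.i₀_eq, Category.assoc, G.fac]; simp [codiag, coprod.inl_desc]

lemma Cyl.i₁_π {A : C} (G : Cyl M A) : G.i₁ ≫ G.π = 𝟙 A := by
  rw [Cyl.i₁_eq, Category.assoc, G.fac]; simp [codiag, coprod.inr_desc]

lemma Cyl.inl_ι_π {A : C} (G : Cyl M A) : coprod.inl ≫ G.ι ≫ G.π = 𝟙 A := by
  rw [← Category.assoc]; exact G.i₀_π

lemma Cyl.inr_ι_π {A : C} (G : Cyl M A) : coprod.inr ≫ G.ι ≫ G.π = 𝟙 A := by
  rw [← Category.assoc]; exact G.i₁_π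

lemma Cyl.inl_ι_π_assoc {A T : C} (G : Cyl M A) (x : A ⟶ T) :
    coprod.inl ≫ G.ι ≫ G.π ≫ x = x := by
  rw [← Category.assoc, ← Category.assoc]
  show (G.i₀ ≫ G.π) ≫ x = x
  rw [G.i₀_π, Category.id_comp]

lemma Cyl.inr_ι_π_assoc {A T : C} (G : Cyl M A) (x : A ⟶ T) :
    coprod.inr ≫ G.ι ≫ G.π ≫ x = x := by
  rw [← Category.assoc, ← Category.assoc]
  show (G.i₁ ≫ G.π) ≫ x = x
  rw [G.i₁_π, Category.id_comp]

lemma Cyl.tcof_i₀ (hcof : ∀ X : C, M.Cofibrant X) {A : C} (G : Cyl M A) :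
    M.Cof G.i₀ ∧ M.W G.i₀ :=
  ⟨cof_comp M (cof_coprod_inl M hcof A A) G.cof,
   M.weq_of_post G.i₀ G.π G.wπ (by rw [G.i₀_π]; exact w_id M A)⟩

lemma Cyl.tcof_i₁ (hcof : ∀ X : C, M.Cofibrant X) {A : C} (G : Cyl M A) :
    M.Cof G.i₁ ∧ M.W G.i₁ :=
  ⟨cof_comp M (cof_coprod_inr M hcof A A) G.cof,
   M.weq_of_post G.i₁ G.π G.wπ (by rw [G.i₁_π]; exact w_id M A)⟩

variable (M)

/-- loose left homotopy -/
def Htp {A B : C} (f g : A ⟶ B) : Prop :=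
  ∃ (D : C) (j₀ j₁ : A ⟶ D) (pd : D ⟶ A) (H : D ⟶ B),
    M.W pd ∧ j₀ ≫ pd = 𝟙 A ∧ j₁ ≫ pd = 𝟙 A ∧ j₀ ≫ H = f ∧ j₁ ≫ H = g

lemma htp_refl {A B : C} (f : A ⟶ B) : Htp M f f :=
  ⟨A, 𝟙 A, 𝟙 A, 𝟙 A, f, w_id M A, by simp, by simp, by simp, by simp⟩

lemma htp_symm {A B : C} {f g : A ⟶ B} (h : Htp M f g) : Htp M g f := by
  obtain ⟨D, j₀, j₁, pd, H, h1, h2, h3, h4, h5⟩ := h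
  exact ⟨D, j₁, j₀, pd, H, h1, h3, h2, h5, h4⟩

lemma htp_post {A B B' : C} {f g : A ⟶ B} (h : Htp M f g) (β : B ⟶ B') :
    Htp M (f ≫ β) (g ≫ β) := by
  obtain ⟨D, j₀, j₁, pd, H, h1, h2, h3, h4, h5⟩ := h
  exact ⟨D, j₀, j₁, pd, H ≫ β, h1, h2, h3, by rw [← Category.assoc, h4],
    by rw [← Category.assoc, h5]⟩

lemma htp_w {A B : C} {f g : A ⟶ B} (h : Htp M f g) (hf : M.W f) : M.W g := by
  obtain ⟨D, j₀, j₁, pd, H, h1, h2, h3, h4, h5⟩ := h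
  have hj₀ : M.W j₀ := M.weq_of_post j₀ pd h1 (by rw [h2]; exact w_id M A)
  have hj₁ : M.W j₁ := M.weq_of_post j₁ pd h1 (by rw [h3]; exact w_id M A)
  have hH : M.W H := M.weq_of_pre j₀ H hj₀ (by rw [h4]; exact hf)
  have := M.weq_comp j₁ H hj₁ hH
  rwa [h5] at this

lemma htp_Lmap_eq {A B : C} {f g : A ⟶ B} (h : Htp M f g) :
    M.W.Q.map f = M.W.Q.map g := by
  obtain ⟨D, j₀, j₁, pd, H, h1, h2, h3, h4, h5⟩ := h
  haveI := M.W.Q_inverts pd h1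
  have e0 : M.W.Q.map j₀ = inv (M.W.Q.map pd) := by
    apply (cancel_mono (M.W.Q.map pd)).1
    rw [IsIso.inv_hom_id, ← M.W.Q.map_comp, h2, M.W.Q.map_id]
  have e1 : M.W.Q.map j₁ = inv (M.W.Q.map pd) := by
    apply (cancel_mono (M.W.Q.map pd)).1
    rw [IsIso.inv_hom_id, ← M.W.Q.map_comp, h3, M.W.Q.map_id]
  rw [← h4, ← h5, M.W.Q.map_comp, M.W.Q.map_comp, e0, e1]

lemma htp_improve {A B : C} (G : Cyl M A) (hB : Fibr M B) {f g : A ⟶ B}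
    (h : Htp M f g) : ∃ H : G.obj ⟶ B, G.i₀ ≫ H = f ∧ G.i₁ ≫ H = g := by
  obtain ⟨D, j₀, j₁, pd, H, h1, h2, h3, h4, h5⟩ := h
  obtain ⟨D₂, k, p'', hk, hp'', fack⟩ := M.wfs_cof_tfib.factor pd
  have hwk : M.W k := M.weq_of_post k p'' hp''.2 (by rwa [fack])
  haveI := M.wfs_tcof_fib.lift k (terminal.from B) ⟨hk, hwk⟩ hB
  have sq : CommSq H k (terminal.from B) (terminal.from D₂) := ⟨terminal.hom_ext _ _⟩
  haveI := M.wfs_cof_tfib.lift G.ι p'' G.cof hp''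
  have sq2 : CommSq (coprod.desc (j₀ ≫ k) (j₁ ≫ k)) G.ι p'' G.π := by
    constructor
    apply coprod.hom_ext
    · rw [Cyl.inl_ι_π, ← Category.assoc, coprod.inl_desc, Category.assoc, fack, h2]
    · rw [Cyl.inr_ι_π, ← Category.assoc, coprod.inr_desc, Category.assoc, fack, h3]
  refine ⟨sq2.lift ≫ sq.lift, ?_, ?_⟩
  · rw [Cyl.i₀_eq, Category.assoc, ← Category.assoc G.ι, sq2.fac_left, ← Category.assoc,
      coprod.inl_desc, Category.assoc, sq.fac_left, h4]
  · rw [Cyl.i₁_eq, Category.assoc, ← Category.assoc G.ι, sq2.fac_left, ← Category.assoc,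
      coprod.inr_desc, Category.assoc, sq.fac_left, h5]

lemma htp_trans (hcof : ∀ X : C, M.Cofibrant X) {A B : C} (hB : Fibr M B)
    {f g h : A ⟶ B} (h₁ : Htp M f g) (h₂ : Htp M g h) : Htp M f h := by
  obtain ⟨G⟩ := exists_cyl M A
  obtain ⟨H₁, e10, e11⟩ := htp_improve M G hB h₁
  obtain ⟨H₂, e20, e21⟩ := htp_improve M G hB h₂
  have hglue : G.i₁ ≫ H₁ = G.i₀ ≫ H₂ := by rw [e11, e20]
  have hπ : G.i₁ ≫ G.π = G.i₀ ≫ G.π := by rw [G.i₀_π, G.i₁_π]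
  have hinl := tcof_pushout_inl M G.i₁ G.i₀ (G.tcof_i₀ hcof)
  refine ⟨pushout G.i₁ G.i₀, G.i₀ ≫ pushout.inl G.i₁ G.i₀, G.i₁ ≫ pushout.inr G.i₁ G.i₀,
    pushout.desc G.π G.π hπ, pushout.desc H₁ H₂ hglue, ?_, ?_, ?_, ?_, ?_⟩
  · refine M.weq_of_pre _ _ hinl.2 ?_
    rw [pushout.inl_desc]
    exact G.wπ
  · rw [Category.assoc, pushout.inl_desc, G.i₀_π]
  · rw [Category.assoc, pushout.inr_desc, G.i₁_π]
  · rw [Category.assoc, pushout.inl_desc, e10]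
  · rw [Category.assoc, pushout.inr_desc, e21]

lemma htp_pre (hcof : ∀ X : C, M.Cofibrant X) {A' A B : C} (α : A' ⟶ A)
    (hB : Fibr M B) {f g : A ⟶ B} (h : Htp M f g) : Htp M (α ≫ f) (α ≫ g) := by
  obtain ⟨G⟩ := exists_cyl M A
  obtain ⟨G'⟩ := exists_cyl M A'
  obtain ⟨H, e0, e1⟩ := htp_improve M G hB h
  haveI := M.wfs_cof_tfib.lift G'.ι G.π G'.cof ⟨G.fib, G.wπ⟩
  have sq : CommSq (coprod.desc (α ≫ G.i₀) (α ≫ G.i₁)) G'.ι G.π (G'.π ≫ α) := by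
    constructor
    apply coprod.hom_ext
    · rw [Cyl.inl_ι_π_assoc, ← Category.assoc, coprod.inl_desc, Category.assoc,
        G.i₀_π, Category.comp_id]
    · rw [Cyl.inr_ι_π_assoc, ← Category.assoc, coprod.inr_desc, Category.assoc,
        G.i₁_π, Category.comp_id]
  refine ⟨G'.obj, G'.i₀, G'.i₁, G'.π, sq.lift ≫ H, G'.wπ, G'.i₀_π, G'.i₁_π, ?_, ?_⟩
  · rw [Cyl.i₀_eq, Category.assoc, ← Category.assoc G'.ι, sq.fac_left, ← Category.assoc,
      coprod.inl_desc, Category.assoc, e0]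
  · rw [Cyl.i₁_eq, Category.assoc, ← Category.assoc G'.ι, sq.fac_left, ← Category.assoc,
      coprod.inr_desc, Category.assoc, e1]

lemma htp_of_tcof_eq {U V T : C} {c : U ⟶ V} (hc : M.Cof c ∧ M.W c)
    {l₁ l₂ : V ⟶ T} (he : c ≫ l₁ = c ≫ l₂) : Htp M l₁ l₂ := by
  have hinl := tcof_pushout_inl M c c hc
  have hid : c ≫ 𝟙 V = c ≫ 𝟙 V := rfl
  refine ⟨pushout c c, pushout.inl c c, pushout.inr c c, pushout.desc (𝟙 V) (𝟙 V) hid,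
    pushout.desc l₁ l₂ he, ?_, by simp [pushout.inl_desc, pushout.inr_desc, pushout.inl_desc_assoc, pushout.inr_desc_assoc], by simp [pushout.inl_desc, pushout.inr_desc, pushout.inl_desc_assoc, pushout.inr_desc_assoc], by simp [pushout.inl_desc, pushout.inr_desc, pushout.inl_desc_assoc, pushout.inr_desc_assoc], by simp [pushout.inl_desc, pushout.inr_desc, pushout.inl_desc_assoc, pushout.inr_desc_assoc]⟩
  refine M.weq_of_pre _ _ hinl.2 ?_
  rw [pushout.inl_desc]
  exact w_id M V

lemma htp_of_tfib_eq (hcof : ∀ X : C, M.Cofibrant X) {V T S : C} {p : T ⟶ S}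
    (hp : M.Fib p ∧ M.W p) {l₁ l₂ : V ⟶ T} (he : l₁ ≫ p = l₂ ≫ p) :
    Htp M l₁ l₂ := by
  obtain ⟨G⟩ := exists_cyl M V
  haveI := M.wfs_cof_tfib.lift G.ι p G.cof hp
  have sq : CommSq (coprod.desc l₁ l₂) G.ι p (G.π ≫ l₁ ≫ p) := by
    constructor
    apply coprod.hom_ext
    · rw [Cyl.inl_ι_π_assoc, ← Category.assoc, coprod.inl_desc]
    · rw [Cyl.inr_ι_π_assoc, ← Category.assoc, coprod.inr_desc, he]
  refine ⟨G.obj, G.i₀, G.i₁, G.π, sq.lift, G.wπ, G.i₀_π, G.i₁_π, ?_, ?_⟩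
  · rw [Cyl.i₀_eq, Category.assoc, sq.fac_left, coprod.inl_desc]
  · rw [Cyl.i₁_eq, Category.assoc, sq.fac_left, coprod.inr_desc]

lemma homotopy_inverse (hcof : ∀ X : C, M.Cofibrant X) {P₀ Q₀ : C} {w : P₀ ⟶ Q₀}
    (hP : Fibr M P₀) (hQ : Fibr M Q₀) (hw : M.W w) :
    ∃ h : Q₀ ⟶ P₀, Htp M (w ≫ h) (𝟙 P₀) ∧ Htp M (h ≫ w) (𝟙 Q₀) := by
  obtain ⟨E, c, p, hc, hp, fac⟩ := M.wfs_cof_tfib.factor w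
  have hwc : M.W c := M.weq_of_post c p hp.2 (by rwa [fac])
  have hE : Fibr M E := fibr_comp M p hp.1 hQ
  obtain ⟨r, hr⟩ := ret_of_tcof M c ⟨hc, hwc⟩ hP
  obtain ⟨s, hs⟩ := sec_of_tfib M hcof p hp
  have hps : Htp M (p ≫ s) (𝟙 E) :=
    htp_of_tfib_eq M hcof hp (by rw [Category.assoc, hs, Category.comp_id, Category.id_comp])
  have hrc : Htp M (r ≫ c) (𝟙 E) :=
    htp_of_tcof_eq M ⟨hc, hwc⟩ (by rw [← Category.assoc, hr, Category.comp_id, Category.id_comp])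
  refine ⟨s ≫ r, ?_, ?_⟩
  · have h1 : Htp M (c ≫ (p ≫ s)) (c ≫ 𝟙 E) := htp_pre M hcof c hE hps
    have h2 := htp_post M h1 r
    have e1 : (c ≫ (p ≫ s)) ≫ r = w ≫ s ≫ r := by
      rw [← fac]; simp only [Category.assoc]
    have e2 : (c ≫ 𝟙 E) ≫ r = 𝟙 P₀ := by rw [Category.comp_id, hr]
    rwa [e1, e2] at h2
  · have h1 : Htp M (s ≫ (r ≫ c)) (s ≫ 𝟙 E) := htp_pre M hcof s hE hrc
    have h2 := htp_post M h1 p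
    have e1 : (s ≫ (r ≫ c)) ≫ p = (s ≫ r) ≫ w := by
      rw [← fac]; simp only [Category.assoc]
    have e2 : (s ≫ 𝟙 E) ≫ p = 𝟙 Q₀ := by rw [Category.comp_id, hs]
    rwa [e1, e2] at h2

end Htpy

end Stmt16

namespace Stmt16

variable {C : Type u} [Category.{v} C] [HasLimits C] [HasColimits C]

section Dcat

variable (M : ModelStruct C)

structure Rep where
  R : C → C
  r : ∀ X₀ : C, X₀ ⟶ R X₀
  cof : ∀ X₀ : C, M.Cof (r X₀)
  w : ∀ X₀ : C, M.W (r X₀)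
  fibr : ∀ X₀ : C, Fibr M (R X₀)

lemma exists_rep : Nonempty (Rep M) := by
  choose R r h1 h2 h3 using fun X₀ : C => exists_fib_repl M X₀
  exact ⟨⟨R, r, h1, h2, h3⟩⟩

def htpSetoid (hcof : ∀ X : C, M.Cofibrant X) (A B : C) (hB : Fibr M B) :
    Setoid (A ⟶ B) where
  r := Htp M
  iseqv := ⟨htp_refl M, fun h => htp_symm M h, fun h1 h2 => htp_trans M hcof hB h1 h2⟩

lemma htp_comp_congr (hcof : ∀ X : C, M.Cofibrant X) {A B B' : C}
    (hB' : Fibr M B') {a₁ a₂ : A ⟶ B} {b₁ b₂ : B ⟶ B'}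
    (ha : Htp M a₁ a₂) (hb : Htp M b₁ b₂) : Htp M (a₁ ≫ b₁) (a₂ ≫ b₂) :=
  htp_trans M hcof hB' (htp_post M ha b₁) (htp_pre M hcof a₂ hB' hb)

variable (hcof : ∀ X : C, M.Cofibrant X) (ρ : Rep M)

def Dcat (_ : ∀ X : C, M.Cofibrant X) (_ : Rep M) : Type u := C

instance instCatD : Category.{v} (Dcat M hcof ρ) where
  Hom U V := Quotient (htpSetoid M hcof (ρ.R U) (ρ.R V) (ρ.fibr V))
  id U := Quotient.mk _ (𝟙 (ρ.R U))
  comp {U V W'} f g :=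
    Quotient.liftOn₂ f g (fun a b => Quotient.mk _ (a ≫ b))
      (fun a₁ b₁ a₂ b₂ ha hb =>
        Quotient.sound (htp_comp_congr M hcof (ρ.fibr W') ha hb))
  id_comp {U V} f := Quotient.inductionOn f (fun a =>
    congrArg (Quotient.mk _) (Category.id_comp a))
  comp_id {U V} f := Quotient.inductionOn f (fun a =>
    congrArg (Quotient.mk _) (Category.comp_id a))
  assoc {U V W' T} f g h := Quotient.inductionOn₃ f g h (fun a b c =>
    congrArg (Quotient.mk _) (Category.assoc a b c))

lemma exists_mapR {X₀ Y₀ : C} (f : X₀ ⟶ Y₀) :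
    ∃ l : ρ.R X₀ ⟶ ρ.R Y₀, ρ.r X₀ ≫ l = f ≫ ρ.r Y₀ := by
  haveI := M.wfs_tcof_fib.lift (ρ.r X₀) (terminal.from (ρ.R Y₀))
    ⟨ρ.cof X₀, ρ.w X₀⟩ (ρ.fibr Y₀)
  have sq : CommSq (f ≫ ρ.r Y₀) (ρ.r X₀) (terminal.from (ρ.R Y₀))
      (terminal.from (ρ.R X₀)) := ⟨terminal.hom_ext _ _⟩
  exact ⟨sq.lift, sq.fac_left⟩

noncomputable def Rep.mapR {X₀ Y₀ : C} (f : X₀ ⟶ Y₀) : ρ.R X₀ ⟶ ρ.R Y₀ :=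
  (exists_mapR M ρ f).choose

lemma Rep.mapR_spec {X₀ Y₀ : C} (f : X₀ ⟶ Y₀) :
    ρ.r X₀ ≫ ρ.mapR M f = f ≫ ρ.r Y₀ :=
  (exists_mapR M ρ f).choose_spec

noncomputable def Ffun : C ⥤ Dcat M hcof ρ where
  obj X₀ := X₀
  map {X₀ Y₀} f := Quotient.mk _ (ρ.mapR M f)
  map_id X₀ := Quotient.sound (htp_of_tcof_eq M ⟨ρ.cof X₀, ρ.w X₀⟩
    (by rw [ρ.mapR_spec M (𝟙 X₀), Category.id_comp, Category.comp_id]))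
  map_comp {X₀ Y₀ Z₀} f g := Quotient.sound (htp_of_tcof_eq M ⟨ρ.cof X₀, ρ.w X₀⟩
    (by rw [ρ.mapR_spec M (f ≫ g), ← Category.assoc, ρ.mapR_spec M f, Category.assoc,
      Category.assoc, ρ.mapR_spec M g]))

lemma Ffun_inverts : M.W.IsInvertedBy (Ffun M hcof ρ) := by
  intro X₀ Y₀ f hf
  have hWm : M.W (ρ.mapR M f) := by
    refine M.weq_of_pre (ρ.r X₀) _ (ρ.w X₀) ?_
    rw [ρ.mapR_spec M f]
    exact M.weq_comp f (ρ.r Y₀) hf (ρ.w Y₀)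
  obtain ⟨h, h1, h2⟩ := homotopy_inverse M hcof (ρ.fibr X₀) (ρ.fibr Y₀) hWm
  exact ⟨⟨Quotient.mk _ h, Quotient.sound h1, Quotient.sound h2⟩⟩

end Dcat

section Inj

variable (M : ModelStruct C)

lemma htp_of_Lmap_eq (hcof : ∀ X : C, M.Cofibrant X) {U V : C} (hV : Fibr M V) {u v : U ⟶ V}
    (h : M.W.Q.map u = M.W.Q.map v) : Htp M u v := by
  obtain ⟨ρ⟩ := exists_rep M
  have hinv := Ffun_inverts M hcof ρ
  have fac := Localization.Construction.fac (Ffun M hcof ρ) hinv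
  have hF : (Ffun M hcof ρ).map u = (Ffun M hcof ρ).map v := by
    rw [Functor.congr_hom fac.symm u, Functor.congr_hom fac.symm v]
    simp only [Functor.comp_map]
    rw [h]
  have hmk : Quotient.mk (htpSetoid M hcof (ρ.R U) (ρ.R V) (ρ.fibr V)) (ρ.mapR M u) =
      Quotient.mk (htpSetoid M hcof (ρ.R U) (ρ.R V) (ρ.fibr V)) (ρ.mapR M v) := hF
  have hmm : Htp M (ρ.mapR M u) (ρ.mapR M v) := Quotient.exact hmk
  have hpre := htp_pre M hcof (ρ.r U) (ρ.fibr V) hmm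
  rw [ρ.mapR_spec M u, ρ.mapR_spec M v] at hpre
  obtain ⟨sV, hsV⟩ := ret_of_tcof M (ρ.r V) ⟨ρ.cof V, ρ.w V⟩ hV
  have hpost := htp_post M hpre sV
  have e1 : (u ≫ ρ.r V) ≫ sV = u := by rw [Category.assoc, hsV, Category.comp_id]
  have e2 : (v ≫ ρ.r V) ≫ sV = v := by rw [Category.assoc, hsV, Category.comp_id]
  rwa [e1, e2] at hpost

end Inj

end Stmt16

namespace Stmt16

variable {C : Type u} [Category.{v} C] [HasLimits C] [HasColimits C]

section Frac

variable (M : ModelStruct C)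

lemma ore (hcof : ∀ X : C, M.Cofibrant X) {V Z Z₂ : C} (w : V ⟶ Z) (hw : M.W w)
    (b : V ⟶ Z₂) :
    ∃ (T : C) (b' : Z ⟶ T) (u : Z₂ ⟶ T), M.W u ∧
      M.W.Q.map w ≫ M.W.Q.map b' = M.W.Q.map b ≫ M.W.Q.map u := by
  obtain ⟨Z₁, k, p, hk, hp, fack⟩ := M.wfs_cof_tfib.factor w
  have hwk : M.W k := M.weq_of_post k p hp.2 (by rwa [fack])
  obtain ⟨s, hs⟩ := sec_of_tfib M hcof p hp
  refine ⟨pushout k b, s ≫ pushout.inl k b, pushout.inr k b,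
    (tcof_pushout_inr M k b ⟨hk, hwk⟩).2, ?_⟩
  haveI := M.W.Q_inverts p hp.2
  have hsp : M.W.Q.map s = inv (M.W.Q.map p) := by
    apply (cancel_mono (M.W.Q.map p)).1
    rw [IsIso.inv_hom_id, ← M.W.Q.map_comp, hs, M.W.Q.map_id]
  calc M.W.Q.map w ≫ M.W.Q.map (s ≫ pushout.inl k b)
      = M.W.Q.map k ≫ (M.W.Q.map p ≫ M.W.Q.map s) ≫ M.W.Q.map (pushout.inl k b) := by
        rw [← fack]; simp only [M.W.Q.map_comp, Category.assoc]
    _ = M.W.Q.map k ≫ M.W.Q.map (pushout.inl k b) := by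
        rw [hsp, IsIso.hom_inv_id, Category.id_comp]
    _ = M.W.Q.map b ≫ M.W.Q.map (pushout.inr k b) := by
        rw [← M.W.Q.map_comp, ← M.W.Q.map_comp, pushout.condition]

lemma exists_fraction (hcof : ∀ X : C, M.Cofibrant X) {U V : C}
    (e : M.W.Q.obj U ⟶ M.W.Q.obj V) :
    ∃ (Z : C) (a : U ⟶ Z) (w : V ⟶ Z), M.W w ∧
      e ≫ M.W.Q.map w = M.W.Q.map a := by
  let P : MorphismProperty M.W.Localization := fun U' V' e' =>
    ∀ (X₀ Y₀ : C) (hU : M.W.Q.obj X₀ = U') (hV : M.W.Q.obj Y₀ = V'),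
      ∃ (Z : C) (a : X₀ ⟶ Z) (w : Y₀ ⟶ Z), M.W w ∧
        eqToHom hU ≫ e' ≫ eqToHom hV.symm ≫ M.W.Q.map w = M.W.Q.map a
  have hobj : ∀ {X₀ Y₀ : C}, M.W.Q.obj X₀ = M.W.Q.obj Y₀ → X₀ = Y₀ := by
    intro X₀ Y₀ h
    exact congrArg (fun o => ((Localization.Construction.objEquiv M.W).symm o)) h
  haveI : P.IsStableUnderComposition := by
    constructor
    intro U' V' W' e₁ e₂ h₁ h₂
    intro X₀ Y₀ hU hV
    have hVm : M.W.Q.obj (((Localization.Construction.objEquiv M.W).symm V')) = V' :=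
      (Localization.Construction.objEquiv M.W).apply_symm_apply V'
    obtain ⟨Z₁, a₁, w₁, hw₁, eq₁⟩ := h₁ X₀ _ hU hVm
    obtain ⟨Z₂, a₂, w₂, hw₂, eq₂⟩ := h₂ _ Y₀ hVm hV
    obtain ⟨T, b', u, hu, hore⟩ := ore M hcof w₁ hw₁ a₂
    haveI := M.W.Q_inverts w₁ hw₁
    haveI := M.W.Q_inverts w₂ hw₂
    haveI := M.W.Q_inverts u hu
    haveI := M.W.Q_inverts _ (M.weq_comp w₂ u hw₂ hu)
    refine ⟨T, a₁ ≫ b', w₂ ≫ u, M.weq_comp w₂ u hw₂ hu, ?_⟩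
    have f₁ : eqToHom hU ≫ e₁ ≫ eqToHom hVm.symm = M.W.Q.map a₁ ≫ inv (M.W.Q.map w₁) := by
      rw [IsIso.eq_comp_inv]
      simpa only [Category.assoc] using eq₁
    have f₂ : eqToHom hVm ≫ e₂ ≫ eqToHom hV.symm = M.W.Q.map a₂ ≫ inv (M.W.Q.map w₂) := by
      rw [IsIso.eq_comp_inv]
      simpa only [Category.assoc] using eq₂
    have key : inv (M.W.Q.map w₁) ≫ M.W.Q.map a₂ = M.W.Q.map b' ≫ inv (M.W.Q.map u) := by
      rw [IsIso.inv_comp_eq, ← Category.assoc, hore, Category.assoc,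
        IsIso.hom_inv_id, Category.comp_id]
    have main : eqToHom hU ≫ (e₁ ≫ e₂) ≫ eqToHom hV.symm
        = M.W.Q.map (a₁ ≫ b') ≫ inv (M.W.Q.map (w₂ ≫ u)) := by
      calc eqToHom hU ≫ (e₁ ≫ e₂) ≫ eqToHom hV.symm
          = (eqToHom hU ≫ e₁ ≫ eqToHom hVm.symm) ≫ (eqToHom hVm ≫ e₂ ≫ eqToHom hV.symm) := by
            simp
        _ = (M.W.Q.map a₁ ≫ inv (M.W.Q.map w₁)) ≫ (M.W.Q.map a₂ ≫ inv (M.W.Q.map w₂)) := by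
            rw [f₁, f₂]
        _ = M.W.Q.map a₁ ≫ (inv (M.W.Q.map w₁) ≫ M.W.Q.map a₂) ≫ inv (M.W.Q.map w₂) := by
            simp only [Category.assoc]
        _ = M.W.Q.map (a₁ ≫ b') ≫ inv (M.W.Q.map (w₂ ≫ u)) := by
            rw [key]
            apply (cancel_mono (M.W.Q.map (w₂ ≫ u))).1
            simp [M.W.Q.map_comp]
    have := (IsIso.eq_comp_inv (M.W.Q.map (w₂ ≫ u))).1 main
    simpa only [Category.assoc] using this
  have hP₁ : ∀ ⦃A₀ B₀ : C⦄ (f : A₀ ⟶ B₀), P (M.W.Q.map f) := by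
    intro A₀ B₀ f X₀ Y₀ hU hV
    obtain rfl := hobj hU
    obtain rfl := hobj hV
    exact ⟨_, f, 𝟙 _, w_id M _, by simp⟩
  have hP₂ : ∀ ⦃A₀ B₀ : C⦄ (w : A₀ ⟶ B₀) (hw : M.W w),
      P (Localization.Construction.wInv w hw) := by
    intro A₀ B₀ w hw X₀ Y₀ hU hV
    obtain rfl := hobj hU
    obtain rfl := hobj hV
    refine ⟨_, 𝟙 _, w, hw, ?_⟩
    have hwinv : Localization.Construction.wInv w hw ≫ M.W.Q.map w = 𝟙 _ :=
      (Localization.Construction.wIso w hw).inv_hom_id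
    simp [hwinv]
  have htop := Localization.Construction.morphismProperty_eq_top P hP₁ hP₂
  have hPe : P e := by rw [htop]; trivial
  obtain ⟨Z, a, w, hw, heq⟩ := hPe U V rfl rfl
  refine ⟨Z, a, w, hw, ?_⟩
  simpa using heq

lemma exists_realization (hcof : ∀ X : C, M.Cofibrant X) {U V : C} (hV : Fibr M V)
    (e : M.W.Q.obj U ⟶ M.W.Q.obj V) : ∃ g : U ⟶ V, M.W.Q.map g = e := by
  obtain ⟨Z, a, w, hw, heq⟩ := exists_fraction M hcof e
  obtain ⟨Z₁, k, p, hk, hp, fack⟩ := M.wfs_cof_tfib.factor w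
  have hwk : M.W k := M.weq_of_post k p hp.2 (by rwa [fack])
  obtain ⟨r, hr⟩ := ret_of_tcof M k ⟨hk, hwk⟩ hV
  obtain ⟨s, hs⟩ := sec_of_tfib M hcof p hp
  haveI := M.W.Q_inverts p hp.2
  haveI := M.W.Q_inverts k hwk
  haveI := M.W.Q_inverts w hw
  have hsp : M.W.Q.map s = inv (M.W.Q.map p) := by
    apply (cancel_mono (M.W.Q.map p)).1
    rw [IsIso.inv_hom_id, ← M.W.Q.map_comp, hs, M.W.Q.map_id]
  have hrk : M.W.Q.map r = inv (M.W.Q.map k) := by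
    apply (cancel_epi (M.W.Q.map k)).1
    rw [IsIso.hom_inv_id, ← M.W.Q.map_comp, hr, M.W.Q.map_id]
  have he : e = M.W.Q.map a ≫ inv (M.W.Q.map w) := by
    rw [IsIso.eq_comp_inv]
    exact heq
  refine ⟨a ≫ s ≫ r, ?_⟩
  rw [he, M.W.Q.map_comp, M.W.Q.map_comp, hsp, hrk]
  apply (cancel_mono (M.W.Q.map w)).1
  simp [← fack, M.W.Q.map_comp]

end Frac

end Stmt16

namespace Stmt16

variable {C : Type u} [Category.{v} C] [HasLimits C] [HasColimits C]

section White

variable (M : ModelStruct C)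

/-- Whitehead: a fibration between fibrant objects which is a homotopy
equivalence is a weak equivalence. -/
lemma w_of_fib_htpEquiv (hcof : ∀ X : C, M.Cofibrant X) {E B : C} (q : E ⟶ B)
    (hq : M.Fib q) (hE : Fibr M E) (hB : Fibr M B) (e : B ⟶ E)
    (h1 : Htp M (q ≫ e) (𝟙 E)) (h2 : Htp M (e ≫ q) (𝟙 B)) : M.W q := by
  obtain ⟨GB⟩ := exists_cyl M B
  obtain ⟨H, e0, e1⟩ := htp_improve M GB hB h2
  haveI := M.wfs_tcof_fib.lift GB.i₀ q (GB.tcof_i₀ hcof) hq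
  have sq : CommSq e GB.i₀ q H := ⟨by rw [e0]⟩
  set s : B ⟶ E := GB.i₁ ≫ sq.lift with hs_def
  have hsq : s ≫ q = 𝟙 B := by rw [hs_def, Category.assoc, sq.fac_right, e1]
  have hse : Htp M e s :=
    ⟨GB.obj, GB.i₀, GB.i₁, GB.π, sq.lift, GB.wπ, GB.i₀_π, GB.i₁_π, sq.fac_left, rfl⟩
  have hqs : Htp M (q ≫ s) (𝟙 E) :=
    htp_trans M hcof hE (htp_symm M (htp_pre M hcof q hE hse)) h1
  have hWqs : M.W (q ≫ s) := htp_w M (htp_symm M hqs) (w_id M E)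
  obtain ⟨F', ca, pa, hca, hpa, faca⟩ := M.wfs_tcof_fib.factor (q ≫ s)
  have hWpa : M.W pa := M.weq_of_pre ca pa hca.2 (by rwa [faca])
  haveI := M.wfs_tcof_fib.lift ca q hca hq
  have sq2 : CommSq (𝟙 E) ca q (pa ≫ q) :=
    ⟨by rw [Category.id_comp, ← Category.assoc, faca, Category.assoc, hsq,
      Category.comp_id]⟩
  have main : M.Fib q ∧ M.W q := by
    refine M.wfs_cof_tfib.rlp q ?_
    intro A₁ B₁ i hi
    haveI := M.wfs_cof_tfib.lift i pa hi ⟨hpa, hWpa⟩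
    constructor
    intro t bt sqq
    have w3 : (t ≫ ca) ≫ pa = i ≫ (bt ≫ s) := by
      rw [Category.assoc, faca, ← Category.assoc, sqq.w, Category.assoc]
    have sq3 : CommSq (t ≫ ca) i pa (bt ≫ s) := ⟨w3⟩
    exact CommSq.HasLift.mk'
      { l := sq3.lift ≫ sq2.lift
        fac_left := by
          rw [← Category.assoc, sq3.fac_left, Category.assoc, sq2.fac_left,
            Category.comp_id]
        fac_right := by
          rw [Category.assoc, sq2.fac_right, ← Category.assoc, sq3.fac_right,
            Category.assoc, hsq, Category.comp_id] }
  exact main.2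

/-- saturation for maps into a fibrant object -/
lemma w_of_isIso_Lmap (hcof : ∀ X : C, M.Cofibrant X) {X₀ F : C} (g : X₀ ⟶ F)
    (hF : Fibr M F) (hiso : IsIso (M.W.Q.map g)) : M.W g := by
  obtain ⟨RX, rX, hc, hw, hfr⟩ := exists_fib_repl M X₀
  haveI := M.W.Q_inverts rX hw
  haveI := M.wfs_tcof_fib.lift rX (terminal.from F) ⟨hc, hw⟩ hF
  have sq : CommSq g rX (terminal.from F) (terminal.from RX) := ⟨terminal.hom_ext _ _⟩
  set d : RX ⟶ F := sq.lift with hd_def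
  have hfac : rX ≫ d = g := sq.fac_left
  haveI hdiso : IsIso (M.W.Q.map d) := by
    have : M.W.Q.map d = inv (M.W.Q.map rX) ≫ M.W.Q.map g := by
      rw [IsIso.eq_inv_comp, ← M.W.Q.map_comp, hfac]
    rw [this]
    infer_instance
  obtain ⟨E, c₂, q₂, hc₂, hq₂, fac₂⟩ := M.wfs_tcof_fib.factor d
  have hEf : Fibr M E := fibr_comp M q₂ hq₂ hF
  obtain ⟨h, hh⟩ := exists_realization M hcof hfr (inv (M.W.Q.map d))
  have h1 : Htp M (d ≫ h) (𝟙 RX) := by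
    refine htp_of_Lmap_eq M hcof hfr ?_
    rw [M.W.Q.map_comp, hh, IsIso.hom_inv_id, M.W.Q.map_id]
  have h2 : Htp M (h ≫ d) (𝟙 F) := by
    refine htp_of_Lmap_eq M hcof hF ?_
    rw [M.W.Q.map_comp, hh, IsIso.inv_hom_id, M.W.Q.map_id]
  obtain ⟨r₂, hr₂⟩ := ret_of_tcof M c₂ hc₂ hfr
  have hr₂c₂ : Htp M (r₂ ≫ c₂) (𝟙 E) :=
    htp_of_tcof_eq M hc₂ (by rw [← Category.assoc, hr₂, Category.comp_id, Category.id_comp])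
  set e₂ : F ⟶ E := h ≫ c₂ with he₂_def
  have he₂q : Htp M (e₂ ≫ q₂) (𝟙 F) := by
    have : e₂ ≫ q₂ = h ≫ d := by rw [he₂_def, Category.assoc, fac₂]
    rwa [this]
  have hA : Htp M (c₂ ≫ ((q₂ ≫ e₂))) c₂ := by
    have hpost := htp_post M h1 c₂
    have eA : (d ≫ h) ≫ c₂ = c₂ ≫ (q₂ ≫ e₂) := by
      rw [he₂_def, ← fac₂]; simp only [Category.assoc]
    have eB : 𝟙 RX ≫ c₂ = c₂ := Category.id_comp c₂
    rwa [eA, eB] at hpost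
  have hqe : Htp M (q₂ ≫ e₂) (𝟙 E) := by
    have t1 : Htp M (q₂ ≫ e₂) (r₂ ≫ (c₂ ≫ (q₂ ≫ e₂))) := by
      have := htp_post M (htp_symm M hr₂c₂) (q₂ ≫ e₂)
      have eC : 𝟙 E ≫ (q₂ ≫ e₂) = q₂ ≫ e₂ := Category.id_comp _
      have eD : (r₂ ≫ c₂) ≫ (q₂ ≫ e₂) = r₂ ≫ (c₂ ≫ (q₂ ≫ e₂)) := by
        simp only [Category.assoc]
      rwa [eC, eD] at this
    have t2 : Htp M (r₂ ≫ (c₂ ≫ (q₂ ≫ e₂))) (r₂ ≫ c₂) := htp_pre M hcof r₂ hEf hA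
    exact htp_trans M hcof hEf (htp_trans M hcof hEf t1 t2) hr₂c₂
  have hWq₂ : M.W q₂ := w_of_fib_htpEquiv M hcof q₂ hq₂ hEf hF e₂ hqe he₂q
  have hWd : M.W d := by
    rw [← fac₂]; exact M.weq_comp c₂ q₂ hc₂.2 hWq₂
  rw [← hfac]
  exact M.weq_comp rX d hw hWd

end White

end Stmt16


/-- in a model category in which every object is cofibrant,
every isomorphism in the homotopy category (the localization at the weak
equivalences, with localization functor `M.W.Q`) is the localization of a
cospan of trivial cofibrations: `φ = L(i) ≫ (L(j))⁻¹`, expressed by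
`φ.hom ≫ L(j) = L(i)` together with the invertibility of `L(j)`. -/
theorem stmt16 {C : Type u} [Category.{v} C] [HasLimits C] [HasColimits C]
    (M : ModelStruct C) (hcof : ∀ X : C, M.Cofibrant X)
    (X Y : C) (φ : M.W.Q.obj X ≅ M.W.Q.obj Y) :
    ∃ (Z : C) (i : X ⟶ Z) (j : Y ⟶ Z),
      M.Cof i ∧ M.W i ∧ M.Cof j ∧ M.W j ∧
      IsIso (M.W.Q.map j) ∧ φ.hom ≫ M.W.Q.map j = M.W.Q.map i := by
  obtain ⟨RY, ρy, hρc, hρw, hρf⟩ := Stmt16.exists_fib_repl M Y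
  haveI := M.W.Q_inverts ρy hρw
  obtain ⟨g, hg⟩ := Stmt16.exists_realization M hcof hρf (φ.hom ≫ M.W.Q.map ρy)
  have hWg : M.W g := by
    refine Stmt16.w_of_isIso_Lmap M hcof g hρf ?_
    rw [hg]
    infer_instance
  obtain ⟨T, c, q', hc, hq', facq⟩ := M.wfs_cof_tfib.factor (coprod.desc g ρy)
  have h1 : (coprod.inl ≫ c) ≫ q' = g := by
    rw [Category.assoc, facq, coprod.inl_desc]
  have h2 : (coprod.inr ≫ c) ≫ q' = ρy := by
    rw [Category.assoc, facq, coprod.inr_desc]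
  have hWi : M.W (coprod.inl ≫ c) :=
    M.weq_of_post _ q' hq'.2 (by rw [h1]; exact hWg)
  have hWj : M.W (coprod.inr ≫ c) :=
    M.weq_of_post _ q' hq'.2 (by rw [h2]; exact hρw)
  haveI := M.W.Q_inverts q' hq'.2
  refine ⟨T, coprod.inl ≫ c, coprod.inr ≫ c,
    Stmt16.cof_comp M (Stmt16.cof_coprod_inl M hcof X Y) hc, hWi,
    Stmt16.cof_comp M (Stmt16.cof_coprod_inr M hcof X Y) hc, hWj,
    M.W.Q_inverts _ hWj, ?_⟩
  apply (cancel_mono (M.W.Q.map q')).1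
  rw [Category.assoc, ← M.W.Q.map_comp, h2, ← hg, ← M.W.Q.map_comp, h1]
end
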